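/- (q-binomial theorem) For |q| < 1 and |z| < 1, Σ_{k≥0} (a;q)_k / (q;q)_k · z^k = (az;q)_∞ / (z;q)_∞. -/

import Mathlib

open Complex

/-- Infinite q-Pochhammer symbol `(x; q)_∞`. -/
noncomputable def qpinf (q x : ℂ) : ℂ := ∏' i : ℕ, (1 - x * q ^ i)

/-- q-shifted factorial `(x; q)_n` for an arbitrary integer `n`. -/
noncomputable def qp (q x : ℂ) (n : ℤ) : ℂ := qpinf q x / qpinf q (x * q ^ n)

/-- Finite q-Pochhammer symbol `(x; q)_k` for `k : ℕ`. -/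
noncomputable def qpn (q x : ℂ) (k : ℕ) : ℂ := ∏ i ∈ Finset.range k, (1 - x * q ^ i)

/-- Unilateral basic hypergeometric series `₂φ₁(a, b; c; q, z)`. -/
noncomputable def phi21 (q a b c z : ℂ) : ℂ :=
  ∑' k : ℕ, (qpn q a k * qpn q b k) / (qpn q q k * qpn q c k) * z ^ k

/-- Bilateral basic hypergeometric series `₂ψ₂(a, b; c, d; q, z)`. -/
noncomputable def psi22 (q a b c d z : ℂ) : ℂ :=
  ∑' k : ℤ, (qp q a k * qp q b k) / (qp q c k * qp q d k) * z ^ k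

/- ## Auxiliary development -/

/-- The coefficients of the series. -/
noncomputable def qc (q a : ℂ) (k : ℕ) : ℂ := qpn q a k / qpn q q k

/-- The sum of the series. -/
noncomputable def qS (q a w : ℂ) : ℂ := ∑' k : ℕ, qc q a k * w ^ k

lemma qpn_zero (q x : ℂ) : qpn q x 0 = 1 := by simp [qpn]

lemma qpn_succ (q x : ℂ) (k : ℕ) : qpn q x (k + 1) = qpn q x k * (1 - x * q ^ k) :=
  Finset.prod_range_succ _ _

lemma one_sub_ne {x : ℂ} (hx : ‖x‖ < 1) : (1 : ℂ) - x ≠ 0 := by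
  intro h
  rw [sub_eq_zero] at h
  rw [← h] at hx
  simp at hx

lemma norm_mul_pow_lt {q x : ℂ} (hq : ‖q‖ < 1) (hx : ‖x‖ < 1) (i : ℕ) : ‖x * q ^ i‖ < 1 := by
  rw [norm_mul, norm_pow]
  calc ‖x‖ * ‖q‖ ^ i ≤ ‖x‖ * 1 := by
        exact mul_le_mul_of_nonneg_left (pow_le_one₀ (norm_nonneg q) hq.le) (norm_nonneg x)
    _ = ‖x‖ := mul_one _
    _ < 1 := hx

lemma qpn_q_ne (q : ℂ) (hq : ‖q‖ < 1) (k : ℕ) : qpn q q k ≠ 0 := by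
  rw [qpn]
  rw [Finset.prod_ne_zero_iff]
  intro i _
  exact one_sub_ne (norm_mul_pow_lt hq hq i)

lemma one_sub_q_pow_ne (q : ℂ) (hq : ‖q‖ < 1) (k : ℕ) : (1 : ℂ) - q ^ (k + 1) ≠ 0 := by
  apply one_sub_ne
  rw [norm_pow]
  exact pow_lt_one₀ (norm_nonneg q) hq (Nat.succ_ne_zero k)

lemma qc_zero (q a : ℂ) : qc q a 0 = 1 := by simp [qc, qpn_zero]

/-- The key coefficient recurrence. -/
lemma qc_rec (q a : ℂ) (hq : ‖q‖ < 1) (k : ℕ) :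
    qc q a (k + 1) * (1 - q ^ (k + 1)) = qc q a k * (1 - a * q ^ k) := by
  have hB : qpn q q k ≠ 0 := qpn_q_ne q hq k
  have hc : (1 : ℂ) - q ^ (k + 1) ≠ 0 := one_sub_q_pow_ne q hq k
  have hqq : qpn q q (k + 1) = qpn q q k * (1 - q ^ (k + 1)) := by
    rw [qpn_succ, pow_succ']
  rw [qc, qc, qpn_succ, hqq]
  field_simp

lemma qc_succ_eq (q a : ℂ) (hq : ‖q‖ < 1) (k : ℕ) :
    qc q a (k + 1) = qc q a k * (1 - a * q ^ k) / (1 - q ^ (k + 1)) := by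
  have hc : (1 : ℂ) - q ^ (k + 1) ≠ 0 := one_sub_q_pow_ne q hq k
  rw [eq_div_iff hc]
  exact qc_rec q a hq k

/-- Absolute summability of the series. -/
lemma qc_summable_norm (q a : ℂ) (hq : ‖q‖ < 1) {w : ℂ} (hw : ‖w‖ < 1) :
    Summable fun k : ℕ => ‖qc q a k‖ * ‖w‖ ^ k := by
  set l : ℝ := (1 + ‖w‖) / 2 with hl_def
  have hl : l < 1 := by rw [hl_def]; linarith
  have hwl : ‖w‖ < l := by rw [hl_def]; linarith
  apply summable_of_ratio_norm_eventually_le hl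
  have h0 : Filter.Tendsto (fun k : ℕ => q ^ k) Filter.atTop (nhds 0) :=
    tendsto_pow_atTop_nhds_zero_of_norm_lt_one hq
  have h1 : Filter.Tendsto (fun k : ℕ => ‖(1 : ℂ) - a * q ^ k‖) Filter.atTop (nhds 1) := by
    have : Filter.Tendsto (fun k : ℕ => (1 : ℂ) - a * q ^ k) Filter.atTop (nhds 1) := by
      have := ((h0.const_mul a).const_sub 1)
      simpa using this
    simpa using this.norm
  have h2 : Filter.Tendsto (fun k : ℕ => ‖(1 : ℂ) - q ^ (k + 1)‖) Filter.atTop (nhds 1) := by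
    have h0' : Filter.Tendsto (fun k : ℕ => q ^ (k + 1)) Filter.atTop (nhds 0) :=
      h0.comp (Filter.tendsto_add_atTop_nat 1)
    have : Filter.Tendsto (fun k : ℕ => (1 : ℂ) - q ^ (k + 1)) Filter.atTop (nhds 1) := by
      have := h0'.const_sub (1 : ℂ)
      simpa using this
    simpa using this.norm
  have hrat : Filter.Tendsto
      (fun k : ℕ => ‖(1 : ℂ) - a * q ^ k‖ / ‖(1 : ℂ) - q ^ (k + 1)‖ * ‖w‖)
      Filter.atTop (nhds ‖w‖) := by
    have := (h1.div h2 one_ne_zero).mul_const ‖w‖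
    simpa using this
  filter_upwards [hrat.eventually_le_const hwl] with k hk
  have hrec := qc_succ_eq q a hq k
  have hnorm : ‖qc q a (k + 1)‖ = ‖qc q a k‖ * ‖(1 : ℂ) - a * q ^ k‖ / ‖(1 : ℂ) - q ^ (k + 1)‖ := by
    rw [hrec, norm_div, norm_mul]
  have hnn : (0 : ℝ) ≤ ‖qc q a k‖ * ‖w‖ ^ k := by positivity
  rw [Real.norm_of_nonneg (by positivity), Real.norm_of_nonneg hnn]
  have hden : (0 : ℝ) < ‖(1 : ℂ) - q ^ (k + 1)‖ :=
    norm_pos_iff.mpr (one_sub_q_pow_ne q hq k)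
  calc ‖qc q a (k + 1)‖ * ‖w‖ ^ (k + 1)
      = (‖(1 : ℂ) - a * q ^ k‖ / ‖(1 : ℂ) - q ^ (k + 1)‖ * ‖w‖) * (‖qc q a k‖ * ‖w‖ ^ k) := by
        rw [hnorm]; ring
    _ ≤ l * (‖qc q a k‖ * ‖w‖ ^ k) := mul_le_mul_of_nonneg_right hk hnn

lemma qc_summable (q a : ℂ) (hq : ‖q‖ < 1) {w : ℂ} (hw : ‖w‖ < 1) :
    Summable fun k : ℕ => qc q a k * w ^ k := by
  apply Summable.of_norm
  simpa [norm_mul, norm_pow] using qc_summable_norm q a hq hw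

/-- The functional equation `(1 - w) f(w) = (1 - a w) f(q w)`. -/
lemma qS_feq (q a : ℂ) (hq : ‖q‖ < 1) {w : ℂ} (hw : ‖w‖ < 1) :
    (1 - w) * qS q a w = (1 - a * w) * qS q a (q * w) := by
  have hqw : ‖q * w‖ < 1 := by
    calc ‖q * w‖ = ‖w * q ^ 1‖ := by rw [pow_one, mul_comm]
      _ < 1 := norm_mul_pow_lt hq hw 1
  have h1 : Summable fun k : ℕ => qc q a k * w ^ k := qc_summable q a hq hw
  have h2 : Summable fun k : ℕ => qc q a k * (q * w) ^ k := qc_summable q a hq hqw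
  have E1 : qS q a w - qS q a (q * w) = ∑' k : ℕ, qc q a (k + 1) * (1 - q ^ (k + 1)) * w ^ (k + 1) := by
    rw [qS, qS, ← Summable.tsum_sub h1 h2, Summable.tsum_eq_zero_add (h1.sub h2)]
    simp only [pow_zero, mul_one, sub_self, zero_add]
    apply tsum_congr
    intro k
    ring
  have E2 : w * qS q a w - a * w * qS q a (q * w)
      = ∑' k : ℕ, qc q a k * (1 - a * q ^ k) * w ^ (k + 1) := by
    rw [qS, qS, ← tsum_mul_left, ← tsum_mul_left, ← Summable.tsum_sub (h1.mul_left w) (h2.mul_left (a * w))]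
    apply tsum_congr
    intro k
    ring
  have E3 : qS q a w - qS q a (q * w) = w * qS q a w - a * w * qS q a (q * w) := by
    rw [E1, E2]
    apply tsum_congr
    intro k
    rw [qc_rec q a hq k]
  linear_combination E3

/-- Iterated functional equation. -/
lemma qS_iter (q a z : ℂ) (hq : ‖q‖ < 1) (hz : ‖z‖ < 1) (n : ℕ) :
    qpn q z n * qS q a z = qpn q (a * z) n * qS q a (q ^ n * z) := by
  induction n with
  | zero => simp [qpn_zero]
  | succ n ih =>
    have hw : ‖q ^ n * z‖ < 1 := by
      calc ‖q ^ n * z‖ = ‖z * q ^ n‖ := by rw [mul_comm]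
        _ < 1 := norm_mul_pow_lt hq hz n
    have hfeq := qS_feq q a hq hw
    rw [show q * (q ^ n * z) = q ^ (n + 1) * z by ring] at hfeq
    rw [qpn_succ, qpn_succ]
    linear_combination (1 - z * q ^ n) * ih + qpn q (a * z) n * hfeq

set_option maxHeartbeats 1000000 in
lemma qS_sub_one_bound (q a : ℂ) (hq : ‖q‖ < 1) {z : ℂ} (hz : ‖z‖ < 1) (n : ℕ) :
    ‖qS q a (q ^ n * z) - 1‖ ≤ ‖q‖ ^ n * ∑' k : ℕ, ‖qc q a (k + 1)‖ * ‖z‖ ^ (k + 1) := by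
  have hMs : Summable fun k : ℕ => ‖qc q a (k + 1)‖ * ‖z‖ ^ (k + 1) :=
    (summable_nat_add_iff 1).mpr (qc_summable_norm q a hq hz)
  have hwz : ‖q ^ n * z‖ = ‖q‖ ^ n * ‖z‖ := by rw [norm_mul, norm_pow]
  have hw : ‖q ^ n * z‖ < 1 := by
    rw [hwz]
    calc ‖q‖ ^ n * ‖z‖ ≤ 1 * ‖z‖ :=
          mul_le_mul_of_nonneg_right (pow_le_one₀ (norm_nonneg q) hq.le) (norm_nonneg z)
      _ = ‖z‖ := one_mul _
      _ < 1 := hz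
  have hs := qc_summable q a hq hw
  have hE : qS q a (q ^ n * z) - 1 = ∑' k : ℕ, qc q a (k + 1) * (q ^ n * z) ^ (k + 1) := by
    rw [qS, Summable.tsum_eq_zero_add hs]
    simp [qc_zero]
  rw [hE]
  have hsn : Summable fun k : ℕ => ‖qc q a (k + 1)‖ * ‖q ^ n * z‖ ^ (k + 1) :=
    (summable_nat_add_iff 1).mpr (qc_summable_norm q a hq hw)
  have hsn' : Summable fun k : ℕ => ‖qc q a (k + 1) * (q ^ n * z) ^ (k + 1)‖ := by
    refine hsn.congr fun k => ?_
    simp [norm_mul, norm_pow]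
  have hterm : ∀ k : ℕ, ‖qc q a (k + 1) * (q ^ n * z) ^ (k + 1)‖
      ≤ ‖q‖ ^ n * (‖qc q a (k + 1)‖ * ‖z‖ ^ (k + 1)) := by
    intro k
    rw [norm_mul, norm_pow, hwz, mul_pow]
    have h1 : (‖q‖ ^ n) ^ (k + 1) ≤ ‖q‖ ^ n := by
      rw [← pow_mul]
      exact pow_le_pow_of_le_one (norm_nonneg q) hq.le
        (Nat.le_mul_of_pos_right n (Nat.succ_pos k))
    have h2 : (0 : ℝ) ≤ ‖z‖ ^ (k + 1) := by positivity
    nlinarith [norm_nonneg (qc q a (k + 1)), mul_le_mul_of_nonneg_right h1 h2]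
  calc ‖∑' k : ℕ, qc q a (k + 1) * (q ^ n * z) ^ (k + 1)‖
      ≤ ∑' k : ℕ, ‖qc q a (k + 1) * (q ^ n * z) ^ (k + 1)‖ := norm_tsum_le_tsum_norm hsn'
    _ ≤ ∑' k : ℕ, ‖q‖ ^ n * (‖qc q a (k + 1)‖ * ‖z‖ ^ (k + 1)) :=
        Summable.tsum_le_tsum hterm hsn' (hMs.mul_left (‖q‖ ^ n))
    _ = ‖q‖ ^ n * ∑' k : ℕ, ‖qc q a (k + 1)‖ * ‖z‖ ^ (k + 1) := tsum_mul_left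

/-- The value of the series tends to 1 as the argument tends to 0 geometrically. -/
lemma qS_tendsto_one (q a z : ℂ) (hq : ‖q‖ < 1) (hz : ‖z‖ < 1) :
    Filter.Tendsto (fun n : ℕ => qS q a (q ^ n * z)) Filter.atTop (nhds 1) := by
  have hlim : Filter.Tendsto
      (fun n : ℕ => ‖q‖ ^ n * ∑' k : ℕ, ‖qc q a (k + 1)‖ * ‖z‖ ^ (k + 1))
      Filter.atTop (nhds 0) := by
    have := (tendsto_pow_atTop_nhds_zero_of_lt_one (norm_nonneg q) hq).mul_const
      (∑' k : ℕ, ‖qc q a (k + 1)‖ * ‖z‖ ^ (k + 1))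
    simpa using this
  have h0 : Filter.Tendsto (fun n : ℕ => qS q a (q ^ n * z) - 1) Filter.atTop (nhds 0) := by
    rw [tendsto_zero_iff_norm_tendsto_zero]
    exact squeeze_zero (fun n => norm_nonneg _) (qS_sub_one_bound q a hq hz) hlim
  have := h0.add_const (1 : ℂ)
  simpa using this

/-- Summability of the logs of the factors. -/
lemma qlog_summable (q x : ℂ) (hq : ‖q‖ < 1) :
    Summable fun i : ℕ => Complex.log (1 - x * q ^ i) := by
  apply Summable.of_norm_bounded_eventually (g := fun i => 3 / 2 * (‖x‖ * ‖q‖ ^ i))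
  · exact ((summable_geometric_of_lt_one (norm_nonneg q) hq).mul_left ‖x‖).mul_left _
  · rw [Nat.cofinite_eq_atTop]
    have h0 : Filter.Tendsto (fun i : ℕ => ‖x‖ * ‖q‖ ^ i) Filter.atTop (nhds 0) := by
      have := (tendsto_pow_atTop_nhds_zero_of_lt_one (norm_nonneg q) hq).const_mul ‖x‖
      simpa using this
    filter_upwards [h0.eventually_le_const (by norm_num : (0 : ℝ) < 1 / 2)] with i hi
    have : ‖-(x * q ^ i)‖ ≤ 1 / 2 := by rwa [norm_neg, norm_mul, norm_pow]
    have hb := Complex.norm_log_one_add_half_le_self this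
    rw [show (1 : ℂ) + -(x * q ^ i) = 1 - x * q ^ i by ring] at hb
    calc ‖Complex.log (1 - x * q ^ i)‖ ≤ 3 / 2 * ‖-(x * q ^ i)‖ := hb
      _ = 3 / 2 * (‖x‖ * ‖q‖ ^ i) := by rw [norm_neg, norm_mul, norm_pow]

lemma qmultipliable (q x : ℂ) (hq : ‖q‖ < 1) :
    Multipliable fun i : ℕ => 1 - x * q ^ i := by
  by_cases h : ∀ i : ℕ, (1 : ℂ) - x * q ^ i ≠ 0
  · exact Complex.multipliable_of_summable_log (qlog_summable q x hq)
  · push_neg at h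
    obtain ⟨N, hN⟩ := h
    refine ⟨0, ?_⟩
    rw [HasProd]
    apply Filter.Tendsto.congr' _ tendsto_const_nhds
    filter_upwards [Filter.eventually_ge_atTop ({N} : Finset ℕ)] with s hs
    exact (Finset.prod_eq_zero (hs (Finset.mem_singleton_self N)) hN).symm

lemma qpinf_ne_zero (q x : ℂ) (hq : ‖q‖ < 1) (hx : ∀ i : ℕ, (1 : ℂ) - x * q ^ i ≠ 0) :
    qpinf q x ≠ 0 := by
  have := Complex.cexp_tsum_eq_tprod (f := fun i => 1 - x * q ^ i) hx (qlog_summable q x hq)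
  rw [qpinf, ← this]
  exact Complex.exp_ne_zero _

lemma qpn_tendsto (q x : ℂ) (hq : ‖q‖ < 1) :
    Filter.Tendsto (fun n : ℕ => qpn q x n) Filter.atTop (nhds (qpinf q x)) :=
  (qmultipliable q x hq).hasProd.tendsto_prod_nat

/-- The q-binomial theorem. -/
theorem q_binomial (q a z : ℂ) (hq : ‖q‖ < 1) (hz : ‖z‖ < 1) :
    ∑' k : ℕ, qpn q a k / qpn q q k * z ^ k = qpinf q (a * z) / qpinf q z := by
  have hne : qpinf q z ≠ 0 := by
    apply qpinf_ne_zero q z hq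
    intro i
    exact one_sub_ne (norm_mul_pow_lt hq hz i)
  have hT1 : Filter.Tendsto (fun n : ℕ => qpn q z n * qS q a z) Filter.atTop
      (nhds (qpinf q z * qS q a z)) := (qpn_tendsto q z hq).mul_const _
  have hT2 : Filter.Tendsto (fun n : ℕ => qpn q z n * qS q a z) Filter.atTop
      (nhds (qpinf q (a * z) * 1)) := by
    apply Filter.Tendsto.congr (fun n => (qS_iter q a z hq hz n).symm)
    exact (qpn_tendsto q (a * z) hq).mul (qS_tendsto_one q a z hq hz)
  have key : qpinf q z * qS q a z = qpinf q (a * z) * 1 := tendsto_nhds_unique hT1 hT2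
  have hgoal : (∑' k : ℕ, qpn q a k / qpn q q k * z ^ k) = qS q a z := rfl
  rw [hgoal, eq_div_iff hne]
  linear_combination key
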